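/- For every positive integer N, the number of positive integers m < N that have no predecessor under f equals ⌊N/(2+√2)⌋. In particular, for ℓ = 1, 2, 3, 4, 5, 6 the number of such m below 10^ℓ is 2, 29, 292, 2928, 29289, 292893 respectively. -/

import Mathlib

/-- The map `f(n) = ⌊n/√2⌋` if `n` is even and `f(n) = ⌊n·√2⌋` if `n` is odd. -/
noncomputable def f (n : ℕ) : ℕ :=
  if Even n then ⌊(n : ℝ) / Real.sqrt 2⌋₊ else ⌊(n : ℝ) * Real.sqrt 2⌋₊

/-- `m` has no predecessor under `f`. -/
def NoPred (m : ℕ) : Prop := ¬ ∃ n : ℕ, 0 < n ∧ f n = m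

section aux

local notation "r2" => Real.sqrt 2

open scoped symmDiff

lemma sq2 : r2 * r2 = 2 := Real.mul_self_sqrt (by norm_num)

lemma r2_lb : (1.41421356 : ℝ) < r2 := by
  nlinarith [sq2, Real.sqrt_nonneg 2]

lemma r2_ub : r2 < (1.41421357 : ℝ) := by
  nlinarith [sq2, Real.sqrt_nonneg 2]

lemma r2_pos : (0:ℝ) < r2 := by linarith [r2_lb]

lemma s_pos : (0:ℝ) < 2 + r2 := by linarith [r2_lb]

lemma hconj : Real.HolderConjugate r2 (2 + r2) := by
  rw [Real.holderConjugate_iff]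
  constructor
  · linarith [r2_lb]
  · have h := sq2
    have h1 : r2 ≠ 0 := ne_of_gt r2_pos
    have h2 : (2:ℝ) + r2 ≠ 0 := ne_of_gt s_pos
    field_simp
    nlinarith [sq2]

/-- Characterization of having a predecessor: membership in the √2 Beatty set. -/
lemma pred_iff (m : ℕ) : (∃ n : ℕ, 0 < n ∧ f n = m) ↔
    ∃ k : ℕ, 0 < k ∧ ⌊(k : ℝ) * r2⌋₊ = m := by
  constructor
  · rintro ⟨n, hn, hfn⟩
    by_cases he : Even n
    · obtain ⟨k, hk⟩ := id he
      have hk2 : n = 2 * k := by omega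
      have hkpos : 0 < k := by omega
      refine ⟨k, hkpos, ?_⟩
      rw [← hfn, f, if_pos he, hk2]
      congr 1
      push_cast
      rw [eq_comm, div_eq_iff (ne_of_gt r2_pos), mul_assoc, sq2]
      ring
    · exact ⟨n, hn, by rw [← hfn, f, if_neg he]⟩
  · rintro ⟨k, hk, hfk⟩
    refine ⟨2 * k, by omega, ?_⟩
    rw [f, if_pos ⟨k, by ring⟩, ← hfk]
    congr 1
    push_cast
    rw [div_eq_iff (ne_of_gt r2_pos), mul_assoc, sq2]
    ring

lemma transfer (r : ℝ) (hr : 0 < r) (m : ℕ) :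
    (∃ k : ℕ, 0 < k ∧ ⌊(k : ℝ) * r⌋₊ = m) ↔
      (m : ℤ) ∈ {x | ∃ k > 0, beattySeq r k = x} := by
  constructor
  · rintro ⟨k, hk, hfk⟩
    refine ⟨(k : ℤ), by exact_mod_cast hk, ?_⟩
    rw [beattySeq, ← hfk, Int.natCast_floor_eq_floor (by positivity)]
    norm_num
  · rintro ⟨k, hk, hfk⟩
    refine ⟨k.toNat, by omega, ?_⟩
    have hkk : ((k.toNat : ℕ) : ℝ) = (k : ℝ) := by
      exact_mod_cast congrArg (Int.cast : ℤ → ℝ) (Int.toNat_of_nonneg hk.le)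
    have := hfk
    rw [beattySeq] at this
    have h0 : (0:ℝ) ≤ (k:ℝ) * r := by
      have : (0:ℝ) ≤ (k:ℝ) := by exact_mod_cast hk.le
      positivity
    have h2 : (⌊(k.toNat : ℝ) * r⌋₊ : ℤ) = ⌊(k:ℝ) * r⌋ := by
      rw [hkk, Int.natCast_floor_eq_floor h0]
    exact_mod_cast h2.trans this

/-- For positive `m`, `NoPred m` iff `m` is in the Beatty set of `2 + √2`. -/
lemma noPred_iff (m : ℕ) (hm : 0 < m) :
    NoPred m ↔ ∃ k : ℕ, 0 < k ∧ ⌊(k : ℝ) * (2 + r2)⌋₊ = m := by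
  have hsd := Irrational.beattySeq_symmDiff_beattySeq_pos hconj irrational_sqrt_two
  have hmem := (Set.ext_iff.1 hsd (m:ℤ)).2 (show (0:ℤ) < (m:ℤ) by exact_mod_cast hm)
  rw [Set.mem_symmDiff] at hmem
  rw [NoPred, pred_iff, transfer r2 r2_pos, transfer (2 + r2) s_pos]
  rcases hmem with ⟨h1, h2⟩ | ⟨h1, h2⟩
  · exact ⟨fun h => absurd h1 h, fun h => absurd h h2⟩
  · exact ⟨fun _ => h1, fun _ => h2⟩

lemma key (N : ℕ) (hN : 0 < N) :
    {m : ℕ | 0 < m ∧ m < N ∧ NoPred m} =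
      (fun k : ℕ => ⌊(k : ℝ) * (2 + r2)⌋₊) '' Set.Icc 1 ⌊(N : ℝ) / (2 + r2)⌋₊ := by
  have hglb : ∀ k : ℕ, 0 < k → 3 ≤ ⌊(k : ℝ) * (2 + r2)⌋₊ := by
    intro k hk
    have h1 : (3:ℝ) ≤ (k : ℝ) * (2 + r2) := by
      have : (1:ℝ) ≤ (k:ℝ) := by exact_mod_cast hk
      nlinarith [r2_lb]
    exact Nat.le_floor h1
  have hIcc : ∀ k : ℕ, 0 < k → (⌊(k : ℝ) * (2 + r2)⌋₊ < N ↔ k ≤ ⌊(N : ℝ) / (2 + r2)⌋₊) := by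
    intro k hk
    rw [Nat.floor_lt (by positivity), Nat.le_floor_iff (by positivity)]
    rw [le_div_iff₀ s_pos]
    constructor
    · exact le_of_lt
    · intro h
      rcases lt_or_eq_of_le h with h | h
      · exact h
      · exfalso
        apply irrational_sqrt_two
        refine ⟨(N : ℚ) / (k : ℚ) - 2, ?_⟩
        have hk0 : ((k:ℝ)) ≠ 0 := by positivity
        have hkq : ((k:ℚ):ℝ) ≠ 0 := by push_cast; exact hk0
        push_cast
        rw [eq_comm, eq_sub_iff_add_eq, eq_div_iff hk0]
        linarith [h]
  ext m
  simp only [Set.mem_setOf_eq, Set.mem_image, Set.mem_Icc]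
  constructor
  · rintro ⟨hm, hmN, hnp⟩
    obtain ⟨k, hk, hfk⟩ := (noPred_iff m hm).1 hnp
    exact ⟨k, ⟨hk, (hIcc k hk).1 (hfk ▸ hmN)⟩, hfk⟩
  · rintro ⟨k, ⟨hk1, hk2⟩, hfk⟩
    have hk : 0 < k := hk1
    have hm : 0 < m := by have := hglb k hk; omega
    refine ⟨hm, ?_, ?_⟩
    · rw [← hfk]; exact (hIcc k hk).2 hk2
    · exact (noPred_iff m hm).2 ⟨k, hk, hfk⟩

lemma main (N : ℕ) (hN : 0 < N) :
    {m : ℕ | 0 < m ∧ m < N ∧ NoPred m}.ncard = ⌊(N : ℝ) / (2 + r2)⌋₊ := by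
  rw [key N hN]
  have hmono : StrictMono (fun k : ℕ => ⌊(k : ℝ) * (2 + r2)⌋₊) := by
    apply strictMono_nat_of_lt_succ
    intro n
    have h1 : (n:ℝ) * (2 + r2) + 1 ≤ ((n:ℕ)+1 : ℝ) * (2 + r2) := by
      nlinarith [r2_lb]
    have h2 : ⌊(n : ℝ) * (2 + r2)⌋₊ + 1 ≤ ⌊((n+1 : ℕ) : ℝ) * (2 + r2)⌋₊ := by
      have := Nat.floor_le_floor (R := ℝ) (by push_cast; linarith : (n:ℝ) * (2 + r2) + 1 ≤ ((n+1:ℕ):ℝ) * (2 + r2))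
      rwa [Nat.floor_add_one (by positivity)] at this
    simpa using h2
  rw [Set.ncard_image_of_injOn (hmono.injective.injOn)]
  rw [← Finset.coe_Icc, Set.ncard_coe_finset, Nat.card_Icc]
  omega

end aux

/-- The number of positive integers `m < N` with no predecessor under `f` is
`⌊N/(2+√2)⌋`; in particular below `10^ℓ` for `ℓ = 1,…,6` there are
`2, 29, 292, 2928, 29289, 292893` such numbers. -/
theorem card_noPred_lt :
    (∀ N : ℕ, 0 < N →
      {m : ℕ | 0 < m ∧ m < N ∧ NoPred m}.ncard = ⌊(N : ℝ) / (2 + Real.sqrt 2)⌋₊) ∧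
    {m : ℕ | 0 < m ∧ m < 10 ^ 1 ∧ NoPred m}.ncard = 2 ∧
    {m : ℕ | 0 < m ∧ m < 10 ^ 2 ∧ NoPred m}.ncard = 29 ∧
    {m : ℕ | 0 < m ∧ m < 10 ^ 3 ∧ NoPred m}.ncard = 292 ∧
    {m : ℕ | 0 < m ∧ m < 10 ^ 4 ∧ NoPred m}.ncard = 2928 ∧
    {m : ℕ | 0 < m ∧ m < 10 ^ 5 ∧ NoPred m}.ncard = 29289 ∧
    {m : ℕ | 0 < m ∧ m < 10 ^ 6 ∧ NoPred m}.ncard = 292893 := by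
  have hfl : ∀ c N : ℕ, ((c : ℝ) * (2 + Real.sqrt 2) ≤ N) → ((N:ℝ) < (c+1) * (2 + Real.sqrt 2)) →
      ⌊(N : ℝ) / (2 + Real.sqrt 2)⌋₊ = c := by
    intro c N h1 h2
    rw [Nat.floor_eq_iff (by positivity)]
    constructor
    · rw [le_div_iff₀ s_pos]; exact h1
    · rw [div_lt_iff₀ s_pos]; push_cast; exact h2
  refine ⟨main, ?_, ?_, ?_, ?_, ?_, ?_⟩ <;>
  · rw [main _ (by norm_num), hfl] <;> push_cast <;> nlinarith [r2_lb, r2_ub]
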